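/- In Y_{p+M|q+N}(s_1 s), the subalgebra generated by { t_{ij}^{(r)} : 1 ≤ i,j ≤ p+q, r ≥ 1 } supercommutes with the subalgebra generated by the coefficients of the entries t'_{L+i, L+j}(u) (1 ≤ i,j ≤ M+N) of the inverse matrix T(u)^{-1}, where L = p+q. In particular, the northwestern L×L corner subalgebra of Y_{p+M|q+N} supercommutes with ψ_L(Y_{M|N}(s)). -/

import Mathlib

noncomputable section

namespace SuperYangian

/-- The sign `(-1)^x` for `x : ZMod 2`. -/
def sgn (x : ZMod 2) : ℂ := if x = 0 then 1 else -1

variable {A : Type*}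

/-- The supercommutator `[x, y] = x*y - ε • (y*x)` with prescribed sign `ε`
(for homogeneous `x`, `y` one takes `ε = (-1)^{|x||y|}`). -/
def scomm [Ring A] [Algebra ℂ A] (ε : ℂ) (x y : A) : A := x * y - ε • (y * x)

/-- `off μ a = μ 0 + ⋯ + μ (a-1)`. -/
def off (μ : ℕ → ℕ) (a : ℕ) : ℕ := ∑ b ∈ Finset.range a, μ b

/-- A family `t i j r` (the coefficient of `u^{-r}` in `t_{ij}(u)`, with 0-based
indices `i j < d`) satisfying the defining RTT relations of the super Yangian
`Y(gl_{M|N})` with parity sequence `p`; the super Yangian itself, via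
`t_{i+1,j+1}^{(r)} = t i j r`, is the universal such family. -/
structure RTT (A : Type*) [Ring A] [Algebra ℂ A] (d : ℕ) (p : ℕ → ZMod 2) where
  t : ℕ → ℕ → ℕ → A
  t_zero : ∀ i j, t i j 0 = if i = j then (1 : A) else 0
  rtt : ∀ i j h k r s : ℕ, i < d → j < d → h < d → k < d →
    scomm (sgn ((p i + p j) * (p h + p k))) (t i j r) (t h k s) =
      sgn (p i * p j + p i * p h + p j * p h) •
        ∑ g ∈ Finset.range (min r s),
          (t h j g * t i k (r + s - 1 - g) - t h j (r + s - 1 - g) * t i k g)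

section Helpers

lemma sgn_zero : sgn (0 : ZMod 2) = 1 := by simp [sgn]

lemma sgn_add (u v : ZMod 2) : sgn (u + v) = sgn u * sgn v := by
  have h : ∀ w : ZMod 2, w = 0 ∨ w = 1 := by decide
  rcases h u with hu | hu <;> rcases h v with hv | hv <;> subst hu <;> subst hv <;>
    simp [sgn] <;> norm_num <;> decide

variable [Ring A] [Algebra ℂ A]

lemma scomm_zero_right (ε : ℂ) (x : A) : scomm ε x 0 = 0 := by simp [scomm]

lemma scomm_zero_left (ε : ℂ) (y : A) : scomm ε 0 y = 0 := by simp [scomm]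

lemma scomm_one_one (x : A) : scomm 1 x 1 = 0 := by simp [scomm]

lemma scomm_one_left (y : A) : scomm 1 (1 : A) y = 0 := by simp [scomm]

lemma scomm_smul_right (ε c : ℂ) (x y : A) : scomm ε x (c • y) = c • scomm ε x y := by
  simp only [scomm, mul_smul_comm, smul_mul_assoc, smul_sub, smul_smul, mul_comm ε c]

lemma scomm_sum {ι : Type*} (s : Finset ι) (ε : ℂ) (x : A) (f : ι → A) :
    scomm ε x (∑ i ∈ s, f i) = ∑ i ∈ s, scomm ε x (f i) := by
  simp only [scomm, Finset.mul_sum, Finset.sum_mul, Finset.smul_sum, ← Finset.sum_sub_distrib]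

lemma scomm_mul (ε₁ ε₂ : ℂ) (x y z : A) :
    scomm (ε₁ * ε₂) x (y * z) = scomm ε₁ x y * z + ε₁ • (y * scomm ε₂ x z) := by
  simp only [scomm, sub_mul, mul_sub, smul_mul_assoc, mul_smul_comm, smul_sub, smul_smul,
    mul_assoc]
  abel

end Helpers

section Series
open PowerSeries

variable [Ring A] [Algebra ℂ A]

lemma coeff_smul' (c : ℂ) (f : PowerSeries A) (n : ℕ) :
    PowerSeries.coeff n (c • f) = c • PowerSeries.coeff n f := rfl

/-- series attached to a matrix family -/
def ser (t : ℕ → ℕ → ℕ → A) (u v : ℕ) : PowerSeries A := PowerSeries.mk fun n => t u v n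

@[simp] lemma coeff_ser (t : ℕ → ℕ → ℕ → A) (u v n : ℕ) :
    PowerSeries.coeff n (ser t u v) = t u v n := PowerSeries.coeff_mk _ _

/-- left shift -/
def sh (f : PowerSeries A) : PowerSeries A := PowerSeries.mk fun n => PowerSeries.coeff (n + 1) f

@[simp] lemma coeff_sh (f : PowerSeries A) (n : ℕ) :
    PowerSeries.coeff n (sh f) = PowerSeries.coeff (n + 1) f := PowerSeries.coeff_mk _ _

lemma X_mul_sh (f : PowerSeries A) (h0 : PowerSeries.coeff 0 f = 0) : X * sh f = f := by
  ext n
  cases n with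
  | zero => simpa [PowerSeries.coeff_zero_X_mul] using h0.symm
  | succ n => simp [PowerSeries.coeff_succ_X_mul]

lemma X_regular (f : PowerSeries A) (h : X * f = 0) : f = 0 := by
  ext n
  have := congrArg (PowerSeries.coeff (n + 1)) h
  simpa [PowerSeries.coeff_succ_X_mul] using this

lemma coeff_scomm_C (ε : ℂ) (x : A) (f : PowerSeries A) (n : ℕ) :
    PowerSeries.coeff n (scomm ε (C x) f) = scomm ε x (PowerSeries.coeff n f) := by
  simp [scomm, map_sub, PowerSeries.coeff_C_mul, PowerSeries.coeff_mul_C, coeff_smul']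

end Series

section Key
open PowerSeries Finset

variable [Ring A] [Algebra ℂ A]

lemma inv_ser {d : ℕ} (t t' : ℕ → ℕ → ℕ → A)
    (hinv : ∀ u v r : ℕ, u < d → v < d →
      ∑ g ∈ Finset.range d, ∑ e ∈ Finset.range (r + 1), t u g e * t' g v (r - e) =
        if u = v ∧ r = 0 then 1 else 0)
    {u v : ℕ} (hu : u < d) (hv : v < d) :
    ∑ g ∈ Finset.range d, ser t u g * ser t' g v = (if u = v then (1 : PowerSeries A) else 0) := by
  ext n
  rw [map_sum]
  have lhs : ∀ g, PowerSeries.coeff n (ser t u g * ser t' g v)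
      = ∑ e ∈ Finset.range (n + 1), t u g e * t' g v (n - e) := by
    intro g
    rw [PowerSeries.coeff_mul]
    rw [← Finset.Nat.sum_antidiagonal_eq_sum_range_succ (fun e f => t u g e * t' g v f) n]
    simp
  rw [Finset.sum_congr rfl fun g _ => lhs g, hinv u v n hu hv]
  by_cases huv : u = v <;> by_cases hn : n = 0 <;>
    simp [huv, hn, PowerSeries.coeff_one]

lemma key {d : ℕ} {p : ℕ → ZMod 2} (S : RTT A d p) (t' : ℕ → ℕ → ℕ → A)
    (hinv : ∀ u v r : ℕ, u < d → v < d →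
      ∑ g ∈ Finset.range d, ∑ e ∈ Finset.range (r + 1), S.t u g e * t' g v (r - e) =
        if u = v ∧ r = 0 then 1 else 0)
    (hinv' : ∀ u v r : ℕ, u < d → v < d →
      ∑ g ∈ Finset.range d, ∑ e ∈ Finset.range (r + 1), t' u g e * S.t g v (r - e) =
        if u = v ∧ r = 0 then 1 else 0)
    {i j a c : ℕ} (hi : i < d) (hj : j < d) (ha : a < d) (hc : c < d)
    (haj : a ≠ j) (hic : i ≠ c) :
    ∀ r s : ℕ, scomm (sgn ((p i + p j) * (p a + p c))) (S.t i j r) (t' a c s) = 0 := by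
  classical
  -- sign identities
  have zmod2 : ∀ w : ZMod 2, w + w = 0 := by decide
  have qone : ∀ u : ℕ, sgn ((p i + p j) * (p u + p u)) = 1 := by
    intro u; rw [zmod2, mul_zero, sgn_zero]
  have sq : ∀ u g v : ℕ, sgn ((p i + p j) * (p u + p g)) * sgn ((p i + p j) * (p g + p v))
      = sgn ((p i + p j) * (p u + p v)) := by
    intro u g v; rw [← sgn_add]; congr 1
    have h : ∀ x y z w : ZMod 2, x * (y + z) + x * (z + w) = x * (y + w) := by decide
    exact h _ _ _ _
  have sq2 : ∀ u g v : ℕ, sgn ((p i + p j) * (p g + p u)) * sgn ((p i + p j) * (p g + p v))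
      = sgn ((p i + p j) * (p u + p v)) := by
    intro u g v; rw [← sgn_add]; congr 1
    have h : ∀ x y z w : ZMod 2, x * (z + y) + x * (z + w) = x * (y + w) := by decide
    exact h _ _ _ _
  have tau : ∀ u v : ℕ, sgn ((p i + p j) * (p u + p v)) * sgn (p i * p j + p i * p u + p j * p u)
      = sgn (p i * p j + (p i + p j) * p v) := by
    intro u v; rw [← sgn_add]; congr 1
    have h : ∀ x y z w : ZMod 2, (x + y) * (z + w) + (x * y + x * z + y * z)
        = x * y + (x + y) * w := by decide
    exact h _ _ _ _
  -- series-level inverse identities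
  have h1 : ∀ u v : ℕ, u < d → v < d →
      ∑ g ∈ Finset.range d, ser S.t u g * ser t' g v
        = (if u = v then (1 : PowerSeries A) else 0) :=
    fun u v hu hv => inv_ser S.t t' hinv hu hv
  have h2 : ∀ u v : ℕ, u < d → v < d →
      ∑ g ∈ Finset.range d, ser t' u g * ser S.t g v
        = (if u = v then (1 : PowerSeries A) else 0) :=
    fun u v hu hv => inv_ser t' S.t hinv' hu hv
  -- the commutator series
  let E : ℕ → ℕ → ℕ → PowerSeries A := fun n u v =>
    scomm (sgn ((p i + p j) * (p u + p v))) (C (S.t i j n)) (ser S.t u v)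
  let E' : ℕ → ℕ → ℕ → PowerSeries A := fun n u v =>
    scomm (sgn ((p i + p j) * (p u + p v))) (C (S.t i j n)) (ser t' u v)
  have hE : ∀ n u v, E n u v
      = scomm (sgn ((p i + p j) * (p u + p v))) (C (S.t i j n)) (ser S.t u v) :=
    fun _ _ _ => rfl
  have hE' : ∀ n u v, E' n u v
      = scomm (sgn ((p i + p j) * (p u + p v))) (C (S.t i j n)) (ser t' u v) :=
    fun _ _ _ => rfl
  -- constant term of t'
  have t'0 : ∀ u v : ℕ, u < d → v < d → t' u v 0 = if u = v then (1 : A) else 0 := by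
    intro u v hu hv
    have h := hinv u v 0 hu hv
    simp only [zero_add, Finset.sum_range_one, Nat.sub_zero] at h
    rw [Finset.sum_congr rfl (fun g _ => by rw [S.t_zero u g])] at h
    simp only [ite_mul, one_mul, zero_mul, Finset.sum_ite_eq, Finset.mem_range, hu, if_true,
      and_true] at h
    exact h
  -- vanishing constant terms
  have cE : ∀ n u v : ℕ, PowerSeries.coeff 0 (E n u v) = 0 := by
    intro n u v
    rw [hE, coeff_scomm_C, coeff_ser, S.t_zero]
    by_cases huv : u = v
    · subst huv; rw [qone, if_pos rfl, scomm_one_one]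
    · rw [if_neg huv, scomm_zero_right]
  have cE' : ∀ n u v : ℕ, u < d → v < d → PowerSeries.coeff 0 (E' n u v) = 0 := by
    intro n u v hu hv
    rw [hE', coeff_scomm_C, coeff_ser, t'0 u v hu hv]
    by_cases huv : u = v
    · subst huv; rw [qone, if_pos rfl, scomm_one_one]
    · rw [if_neg huv, scomm_zero_right]
  -- the linear form of the RTT relation, at series level
  have lin : ∀ n u v : ℕ, u < d → v < d →
      E (n + 1) u v - sh (E n u v) = sgn (p i * p j + p i * p u + p j * p u) •
        (C (S.t u j n) * ser S.t i v - ser S.t u j * C (S.t i v n)) := by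
    intro n u v hu hv
    ext s'
    rw [map_sub, coeff_sh, hE, hE, coeff_scomm_C, coeff_scomm_C, coeff_ser, coeff_ser,
      S.rtt i j u v (n + 1) s' hi hj hu hv, S.rtt i j u v n (s' + 1) hi hj hu hv,
      coeff_smul', map_sub, PowerSeries.coeff_C_mul, PowerSeries.coeff_mul_C, coeff_ser,
      coeff_ser, ← smul_sub]
    congr 1
    have harg : ∀ g : ℕ, n + 1 + s' - 1 - g = n + s' - g := by intro g; omega
    have harg2 : ∀ g : ℕ, n + (s' + 1) - 1 - g = n + s' - g := by intro g; omega
    simp only [harg, harg2]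
    rcases lt_trichotomy n s' with h | h | h
    · rw [Nat.min_eq_left (by omega : n + 1 ≤ s'), Nat.min_eq_left (by omega : n ≤ s' + 1),
        Finset.sum_range_succ, add_sub_cancel_left,
        (by omega : n + s' - n = s')]
    · subst h
      rw [Nat.min_eq_right (by omega : n ≤ n + 1), Nat.min_eq_left (by omega : n ≤ n + 1),
        sub_self, sub_self]
    · rw [Nat.min_eq_right (by omega : s' ≤ n + 1), Nat.min_eq_right (by omega : s' + 1 ≤ n),
        Finset.sum_range_succ, ← sub_sub, sub_self, zero_sub, neg_sub,
        (by omega : n + s' - s' = n)]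
  -- commutator of X with the inverse identity
  have EqA : ∀ n u v : ℕ, u < d → v < d →
      ∑ g ∈ Finset.range d,
        (E n u g * ser t' g v
          + sgn ((p i + p j) * (p u + p g)) • (ser S.t u g * E' n g v)) = 0 := by
    intro n u v hu hv
    have hc1 : ∀ g : ℕ,
        E n u g * ser t' g v + sgn ((p i + p j) * (p u + p g)) • (ser S.t u g * E' n g v)
          = scomm (sgn ((p i + p j) * (p u + p v))) (C (S.t i j n))
              (ser S.t u g * ser t' g v) := by
      intro g
      rw [← sq u g v, scomm_mul, hE, hE']
    rw [Finset.sum_congr rfl fun g _ => hc1 g, ← scomm_sum, h1 u v hu hv]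
    by_cases huv : u = v
    · subst huv; rw [if_pos rfl, qone, scomm_one_one]
    · rw [if_neg huv, scomm_zero_right]
  -- the shifted version
  have EqAh : ∀ n u v : ℕ, u < d → v < d →
      ∑ g ∈ Finset.range d,
        (sh (E n u g) * ser t' g v
          + sgn ((p i + p j) * (p u + p g)) • (ser S.t u g * sh (E' n g v))) = 0 := by
    intro n u v hu hv
    apply X_regular
    rw [Finset.mul_sum]
    have hterm : ∀ g ∈ Finset.range d,
        X * (sh (E n u g) * ser t' g v
          + sgn ((p i + p j) * (p u + p g)) • (ser S.t u g * sh (E' n g v)))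
        = E n u g * ser t' g v
          + sgn ((p i + p j) * (p u + p g)) • (ser S.t u g * E' n g v) := by
      intro g hg
      rw [mul_add, ← mul_assoc, X_mul_sh _ (cE n u g), mul_smul_comm, ← mul_assoc,
        ← (PowerSeries.commute_X (ser S.t u g)).eq, mul_assoc,
        X_mul_sh _ (cE' n g v (Finset.mem_range.mp hg) hv)]
    rw [Finset.sum_congr rfl hterm, EqA n u v hu hv]
  -- step B: solve for the unknown commutators against T on the left
  have EqB : ∀ n u : ℕ, u < d →
      ∑ g ∈ Finset.range d, sgn ((p i + p j) * (p u + p g)) •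
          (ser S.t u g * (E' (n + 1) g c - sh (E' n g c)))
        = sgn (p i * p j + p i * p u + p j * p u) •
            (ser S.t u j * ∑ g ∈ Finset.range d, C (S.t i g n) * ser t' g c) := by
    intro n u hu
    have hA := EqA (n + 1) u c hu hc
    have hB := EqAh n u c hu hc
    have h3 : (∑ g ∈ Finset.range d, (E (n + 1) u g - sh (E n u g)) * ser t' g c)
        + ∑ g ∈ Finset.range d, sgn ((p i + p j) * (p u + p g)) •
            (ser S.t u g * (E' (n + 1) g c - sh (E' n g c))) = 0 := by
      have hcomb : ∀ g : ℕ, (E (n + 1) u g - sh (E n u g)) * ser t' g c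
            + sgn ((p i + p j) * (p u + p g)) •
                (ser S.t u g * (E' (n + 1) g c - sh (E' n g c)))
          = (E (n + 1) u g * ser t' g c
              + sgn ((p i + p j) * (p u + p g)) • (ser S.t u g * E' (n + 1) g c))
            - (sh (E n u g) * ser t' g c
              + sgn ((p i + p j) * (p u + p g)) • (ser S.t u g * sh (E' n g c))) := by
        intro g; rw [sub_mul, mul_sub, smul_sub]; abel
      rw [← Finset.sum_add_distrib, Finset.sum_congr rfl (fun g _ => hcomb g),
        Finset.sum_sub_distrib, hA, hB, sub_zero]
    have h4 : ∑ g ∈ Finset.range d, (E (n + 1) u g - sh (E n u g)) * ser t' g c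
        = sgn (p i * p j + p i * p u + p j * p u) •
            ((0 : PowerSeries A)
              - ser S.t u j * ∑ g ∈ Finset.range d, C (S.t i g n) * ser t' g c) := by
      have hterm : ∀ g : ℕ, g < d → (E (n + 1) u g - sh (E n u g)) * ser t' g c
          = sgn (p i * p j + p i * p u + p j * p u) •
              (C (S.t u j n) * (ser S.t i g * ser t' g c)
                - ser S.t u j * (C (S.t i g n) * ser t' g c)) := by
        intro g hg
        rw [lin n u g hu hg, smul_mul_assoc, sub_mul, mul_assoc, mul_assoc]
      rw [Finset.sum_congr rfl (fun g hg => hterm g (Finset.mem_range.mp hg)), ← Finset.smul_sum,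
        Finset.sum_sub_distrib, ← Finset.mul_sum, ← Finset.mul_sum, h1 i c hi hc, if_neg hic,
        mul_zero]
    rw [h4] at h3
    rw [eq_neg_of_add_eq_zero_right h3, zero_sub, smul_neg, neg_neg]
  -- reconstruction by multiplying with the inverse matrix on the left
  have recon : ∀ G : ℕ → PowerSeries A,
      ∑ u ∈ Finset.range d, sgn ((p i + p j) * (p u + p a)) •
          (ser t' a u * ∑ g ∈ Finset.range d, sgn ((p i + p j) * (p u + p g)) •
              (ser S.t u g * G g)) = G a := by
    intro G
    have hstep1 : ∀ u : ℕ, sgn ((p i + p j) * (p u + p a)) •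
        (ser t' a u * ∑ g ∈ Finset.range d, sgn ((p i + p j) * (p u + p g)) •
          (ser S.t u g * G g))
        = ∑ g ∈ Finset.range d, sgn ((p i + p j) * (p a + p g)) •
            ((ser t' a u * ser S.t u g) * G g) := by
      intro u
      rw [Finset.mul_sum, Finset.smul_sum]
      refine Finset.sum_congr rfl fun g _ => ?_
      rw [mul_smul_comm, smul_smul, mul_assoc, sq2 a u g]
    rw [Finset.sum_congr rfl fun u _ => hstep1 u, Finset.sum_comm]
    have hstep2 : ∀ g : ℕ, g < d → ∑ u ∈ Finset.range d,
        sgn ((p i + p j) * (p a + p g)) • ((ser t' a u * ser S.t u g) * G g)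
        = sgn ((p i + p j) * (p a + p g)) •
            ((if a = g then (1 : PowerSeries A) else 0) * G g) := by
      intro g hg
      rw [← Finset.smul_sum, ← Finset.sum_mul, h2 a g ha hg]
    rw [Finset.sum_congr rfl (fun g hg => hstep2 g (Finset.mem_range.mp hg))]
    refine (Finset.sum_eq_single_of_mem a (Finset.mem_range.mpr ha) ?_).trans ?_
    · intro g _ hga
      rw [if_neg (fun h => hga h.symm), zero_mul, smul_zero]
    · rw [if_pos rfl, one_mul, qone, one_smul]
  -- the difference series vanishes
  have Wzero : ∀ n : ℕ, E' (n + 1) a c - sh (E' n a c) = 0 := by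
    intro n
    refine ((recon fun g => E' (n + 1) g c - sh (E' n g c)).symm).trans ?_
    have hterm : ∀ u : ℕ, u < d → sgn ((p i + p j) * (p u + p a)) •
        (ser t' a u * ∑ g ∈ Finset.range d, sgn ((p i + p j) * (p u + p g)) •
          (ser S.t u g * (E' (n + 1) g c - sh (E' n g c))))
        = sgn (p i * p j + (p i + p j) * p a) •
            ((ser t' a u * ser S.t u j) *
              ∑ g ∈ Finset.range d, C (S.t i g n) * ser t' g c) := by
      intro u hu
      rw [EqB n u hu, mul_smul_comm, smul_smul, mul_assoc, tau u a]
    rw [Finset.sum_congr rfl (fun u hu => hterm u (Finset.mem_range.mp hu)),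
      ← Finset.smul_sum, ← Finset.sum_mul, h2 a j ha hj, if_neg haj, zero_mul, smul_zero]
  -- induction on the u-degree
  have main : ∀ n : ℕ, E' n a c = 0 := by
    intro n
    induction n with
    | zero =>
      ext s'
      rw [hE', coeff_scomm_C, coeff_ser, map_zero, S.t_zero]
      by_cases hij : i = j
      · have h0 : p i + p j = 0 := by rw [hij]; exact zmod2 _
        rw [if_pos hij, h0, zero_mul, sgn_zero, scomm_one_left]
      · rw [if_neg hij, scomm_zero_left]
    | succ n ih =>
      have h0 : sh (E' n a c) = 0 := by
        ext s'; rw [coeff_sh, ih, map_zero, map_zero]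
      have hW := Wzero n
      rw [h0, sub_zero] at hW
      exact hW
  intro r s
  have hfin := congrArg (PowerSeries.coeff s) (main r)
  rw [hE', coeff_scomm_C, coeff_ser, map_zero] at hfin
  exact hfin

end Key

/-- In `Y_{p+q+M|q+N}(s₁s)` with `d = L + M + N`, `L = p + q`, the
(homogeneous) generators `t_{ij}^{(r)}` (`i, j ≤ L`, `r ≥ 1`) of the northwestern
corner subalgebra supercommute with the (homogeneous) generators
`t'_{L+i, L+j}^{(s)}` of `ψ_L(Y_{M|N}(s))`, where `t'` are the entries of `T(u)^{-1}`.
Since all these generators are homogeneous, the two subalgebras they generate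
supercommute. -/
theorem statement4 [Ring A] [Algebra ℂ A] {L m : ℕ} {p : ℕ → ZMod 2}
    (S : RTT A (L + m) p) (t' : ℕ → ℕ → ℕ → A)
    (hinv : ∀ i j r : ℕ, i < L + m → j < L + m →
      ∑ g ∈ Finset.range (L + m), ∑ e ∈ Finset.range (r + 1), S.t i g e * t' g j (r - e) =
        if i = j ∧ r = 0 then 1 else 0)
    (hinv' : ∀ i j r : ℕ, i < L + m → j < L + m →
      ∑ g ∈ Finset.range (L + m), ∑ e ∈ Finset.range (r + 1), t' i g e * S.t g j (r - e) =
        if i = j ∧ r = 0 then 1 else 0) :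
    ∀ i j h k r s : ℕ, i < L → j < L → h < m → k < m →
      scomm (sgn ((p i + p j) * (p (L + h) + p (L + k))))
        (S.t i j r) (t' (L + h) (L + k) s) = 0 := by
  intro i j h k r s hiL hjL hh hk
  exact key S t' hinv hinv' (lt_of_lt_of_le hiL (Nat.le_add_right L m))
    (lt_of_lt_of_le hjL (Nat.le_add_right L m))
    (Nat.add_lt_add_left hh L) (Nat.add_lt_add_left hk L)
    (by omega) (by omega) r s

end SuperYangian
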